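/- Suppose a parent particle with four-momentum (E, p), E ≥ |p|, decays into a visible daughter (E_v, p_v) and an invisible daughter (E_i, p_i), i.e. E = E_v + E_i and p = p_v + p_i, where E_v ≥ |p_v| and E_i ≥ |p_i|. Let m_v and m_i be the invariant masses of the daughters, vT and qT their transverse momenta, and m₀ = √(E² − |p|²) the parent mass. Then m_T(m_v, vT, m_i, qT) ≤ m₀. -/

import Mathlib

open scoped RealInnerProductSpace

/-- Transverse energy `e(m,p) = √(m² + |p|²)`. -/
noncomputable def transverseEnergy (m : ℝ) (p : EuclideanSpace ℝ (Fin 2)) : ℝ :=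
  Real.sqrt (m ^ 2 + ‖p‖ ^ 2)

/-- Transverse mass `m_T(m_v, vT, m_i, qT)`. -/
noncomputable def transverseMass (mv : ℝ) (vT : EuclideanSpace ℝ (Fin 2))
    (mi : ℝ) (qT : EuclideanSpace ℝ (Fin 2)) : ℝ :=
  Real.sqrt (mv ^ 2 + mi ^ 2 +
    2 * (transverseEnergy mv vT * transverseEnergy mi qT - ⟪vT, qT⟫))

/-- Projection of a 3-momentum onto the transverse plane (first two coordinates). -/
noncomputable def projT (p : EuclideanSpace ℝ (Fin 3)) : EuclideanSpace ℝ (Fin 2) :=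
  WithLp.toLp 2 (fun i : Fin 2 => p i.castSucc)

/-- Invariant mass `√(E² − |p|²)` of a 3+1 four-momentum `(E, p)`. -/
noncomputable def invariantMass (E : ℝ) (p : EuclideanSpace ℝ (Fin 3)) : ℝ :=
  Real.sqrt (E ^ 2 - ‖p‖ ^ 2)

lemma inner_decomp (x y : EuclideanSpace ℝ (Fin 3)) :
    ⟪x, y⟫ = ⟪projT x, projT y⟫ + x 2 * y 2 := by
  simp [PiLp.inner_apply, Fin.sum_univ_three, Fin.sum_univ_two, projT,
    RCLike.inner_apply, Fin.castSucc_zero, Fin.castSucc_one]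
  ring

lemma norm_decomp (x : EuclideanSpace ℝ (Fin 3)) :
    ‖x‖ ^ 2 = ‖projT x‖ ^ 2 + (x 2) ^ 2 := by
  have h1 := real_inner_self_eq_norm_sq x
  have h2 := real_inner_self_eq_norm_sq (projT x)
  have := inner_decomp x x
  nlinarith [this, h1, h2]

set_option maxHeartbeats 1000000 in
/-- for the decay of a single parent `(E, p)` into a visible daughter
`(E_v, p_v)` and an invisible daughter `(E_i, p_i)`, the transverse mass (evaluated
at the true daughter masses and transverse momenta) is bounded above by the parent
mass `m₀ = √(E² − |p|²)`. -/
theorem transverseMass_le_parent_mass (E Ev Ei : ℝ)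
    (p pv pinv : EuclideanSpace ℝ (Fin 3))
    (hE : E = Ev + Ei) (hp : p = pv + pinv) (hEp : ‖p‖ ≤ E)
    (hv : ‖pv‖ ≤ Ev) (hi : ‖pinv‖ ≤ Ei) :
    transverseMass (invariantMass Ev pv) (projT pv)
      (invariantMass Ei pinv) (projT pinv) ≤ invariantMass E p := by
  have h0v : (0:ℝ) ≤ ‖pv‖ := norm_nonneg _
  have h0i : (0:ℝ) ≤ ‖pinv‖ := norm_nonneg _
  have hEv : (0:ℝ) ≤ Ev := h0v.trans hv
  have hEi : (0:ℝ) ≤ Ei := h0i.trans hi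
  set a := pv 2 with ha
  set b := pinv 2 with hb
  have hdv := norm_decomp pv
  have hdi := norm_decomp pinv
  have hmv : invariantMass Ev pv ^ 2 = Ev ^ 2 - ‖pv‖ ^ 2 := by
    rw [invariantMass, Real.sq_sqrt (sub_nonneg.mpr (pow_le_pow_left₀ h0v hv 2))]
  have hmi : invariantMass Ei pinv ^ 2 = Ei ^ 2 - ‖pinv‖ ^ 2 := by
    rw [invariantMass, Real.sq_sqrt (sub_nonneg.mpr (pow_le_pow_left₀ h0i hi 2))]
  set ev := transverseEnergy (invariantMass Ev pv) (projT pv) with hevdef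
  set ei := transverseEnergy (invariantMass Ei pinv) (projT pinv) with heidef
  have hev0 : 0 ≤ ev := Real.sqrt_nonneg _
  have hei0 : 0 ≤ ei := Real.sqrt_nonneg _
  have hev : ev ^ 2 = Ev ^ 2 - a ^ 2 := by
    rw [hevdef, transverseEnergy, Real.sq_sqrt (by positivity)]
    rw [hmv]; linarith
  have hei : ei ^ 2 = Ei ^ 2 - b ^ 2 := by
    rw [heidef, transverseEnergy, Real.sq_sqrt (by positivity)]
    rw [hmi]; linarith
  have key : ev * ei + a * b ≤ Ev * Ei := by
    nlinarith [sq_nonneg (ev * b - a * ei), mul_nonneg hEv hEi,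
      mul_nonneg hev0 hei0, sq_nonneg (Ev * Ei + ev * ei + a * b)]
  have hip := inner_decomp pv pinv
  have hnp : ‖p‖ ^ 2 = ‖pv‖ ^ 2 + 2 * ⟪pv, pinv⟫ + ‖pinv‖ ^ 2 := by
    rw [hp]; exact norm_add_sq_real pv pinv
  have hfin : invariantMass Ev pv ^ 2 + invariantMass Ei pinv ^ 2 +
      2 * (ev * ei - ⟪projT pv, projT pinv⟫) ≤ E ^ 2 - ‖p‖ ^ 2 := by
    rw [hE]; nlinarith [hmv, hmi, hnp, hip, key]
  exact Real.sqrt_le_sqrt hfin
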